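/- Let R be an associative unital ring (not necessarily commutative), α : ℤ → R a family of elements, and S_s^k(n) the associated non-commutative Svinin polynomials. Let m ≥ 0 be an integer and let d_0, d_2, …, d_{2m} be central elements of R. Define P_{0,n} := Σ_{r=0}^{m} d_{2r} · S_{r+1}^r(n+r−1) and F_n := Σ_{r=1}^{m+1} d_{2(r−1)} · S_r^r(n+r−1) + n·1 (where n·1 denotes the image of the integer n in R). Then for every n ∈ ℤ, F_n − F_{n−1} = 1 + α_n · P_{0,n+1} − P_{0,n−1} · α_{n−1}. -/
import Mathlib


/-- Non-commutative Svinin polynomials: `svinin α s k n` is `S_s^k(n)`, defined by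
`S_s^0(n) = 1` and `S_s^k(n) = Σ_{j=0}^{s−1} α_{n−k−j+1} · S_{s−j}^{k−1}(n−j)` for `k ≥ 1`. -/
def svinin {R : Type*} [Ring R] (α : ℤ → R) : ℕ → ℕ → ℤ → R
  | _, 0, _ => 1
  | s, k + 1, n =>
      ∑ j ∈ Finset.range s,
        α (n - ((k : ℤ) + 1) - (j : ℤ) + 1) * svinin α (s - j) k (n - (j : ℤ))

/-- `P0 α m d n` is `P_{0,n} = Σ_{r=0}^{m} d_{2r} · S_{r+1}^r(n+r−1)`,
where `d r` stands for `d_{2r}`. -/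
def P0 {R : Type*} [Ring R] (α : ℤ → R) (m : ℕ) (d : ℕ → R) (n : ℤ) : R :=
  ∑ r ∈ Finset.range (m + 1), d r * svinin α (r + 1) r (n + (r : ℤ) - 1)

/-- `Fgam α m d n` is `F_n = Σ_{r=1}^{m+1} d_{2(r−1)} · S_r^r(n+r−1) + n·1`. -/
def Fgam {R : Type*} [Ring R] (α : ℤ → R) (m : ℕ) (d : ℕ → R) (n : ℤ) : R :=
  (∑ r ∈ Finset.Icc 1 (m + 1), d (r - 1) * svinin α r r (n + (r : ℤ) - 1)) + (n : R)

section Aux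

variable {R : Type*} [Ring R] (α : ℤ → R)

/-- Normalized form of the defining (left) recursion. -/
lemma svinin_succ' (s k : ℕ) (n : ℤ) :
    svinin α s (k+1) n
      = ∑ j ∈ Finset.range s, α (n - k - j) * svinin α (s-j) k (n - j) := by
  rw [svinin]
  exact Finset.sum_congr rfl fun j _ => by ring_nf

/-- Triangle summation exchange. -/
lemma svinin_tri {M : Type*} [AddCommMonoid M] (N : ℕ) (g : ℕ → ℕ → M) :
    ∑ i ∈ Finset.range N, ∑ j ∈ Finset.range (N - i), g i j
      = ∑ p ∈ Finset.range N, ∑ q ∈ Finset.range (p+1), g q (p - q) := by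
  rw [Finset.sum_sigma', Finset.sum_sigma']
  refine Finset.sum_nbij' (fun x => Sigma.mk (x.1 + x.2) x.1)
    (fun x => Sigma.mk x.2 (x.1 - x.2)) ?_ ?_ ?_ ?_ ?_ <;>
    rintro ⟨a, b⟩ h <;>
    simp only [Finset.mem_sigma, Finset.mem_range] at h ⊢
  · omega
  · omega
  · rw [Nat.add_sub_cancel_left]
  · rw [Nat.add_sub_cancel' (by omega : b ≤ a)]
  · congr 1 <;> omega

/-- The dual (right) recursion: `S_s^{k+1}(n) = Σ_{j<s} S_{j+1}^k(n−1) · α_{n−j}`. -/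
lemma svinin_right (k : ℕ) : ∀ (s : ℕ) (n : ℤ),
    svinin α s (k+1) n = ∑ j ∈ Finset.range s, svinin α (j+1) k (n-1) * α (n - j) := by
  induction k with
  | zero =>
    intro s n
    rw [svinin_succ']
    refine Finset.sum_congr rfl fun j _ => ?_
    show α (n - 0 - j) * 1 = 1 * α (n - j)
    rw [mul_one, one_mul]; ring_nf
  | succ k ih =>
    intro s n
    rw [svinin_succ']
    calc ∑ i ∈ Finset.range s, α (n - (k+1 : ℕ) - i) * svinin α (s-i) (k+1) (n - i)
        = ∑ i ∈ Finset.range s, ∑ j ∈ Finset.range (s - i),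
            α (n - (k+1) - i) * (svinin α (j+1) k (n - i - 1) * α (n - i - j)) := by
          refine Finset.sum_congr rfl fun i _ => ?_
          rw [ih (s-i) (n-i), Finset.mul_sum]
          refine Finset.sum_congr rfl fun j _ => ?_
          push_cast; ring_nf
      _ = ∑ p ∈ Finset.range s, ∑ q ∈ Finset.range (p+1),
            α (n - (k+1) - q) * (svinin α ((p-q)+1) k (n - q - 1) * α (n - q - (p-q : ℕ))) :=
          svinin_tri s _
      _ = ∑ j ∈ Finset.range s, svinin α (j+1) (k+1) (n-1) * α (n - j) := by
          refine Finset.sum_congr rfl fun p hp => ?_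
          rw [svinin_succ', Finset.sum_mul]
          refine Finset.sum_congr rfl fun q hq => ?_
          simp only [Finset.mem_range] at hp hq
          have h1 : p + 1 - q = (p - q) + 1 := by omega
          have h2 : ((p - q : ℕ) : ℤ) = (p : ℤ) - q := by omega
          rw [h1, h2, mul_assoc]
          congr 2 <;> ring_nf

/-- The exchange identity used in the telescoping. -/
lemma svininA (k : ℕ) : ∀ (t : ℕ) (n : ℤ),
    ∑ j ∈ Finset.range t, α (n - k - j - 1) * svinin α (t - j) k (n - j - 1)
      = ∑ j ∈ Finset.range t, svinin α (j+1) k (n-2) * α (n - j - 1) := by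
  induction k with
  | zero =>
    intro t n
    refine Finset.sum_congr rfl fun j _ => ?_
    show α (n - 0 - j - 1) * 1 = 1 * α (n - j - 1)
    rw [mul_one, one_mul]; ring_nf
  | succ k ih =>
    intro t n
    calc ∑ j ∈ Finset.range t, α (n - (k+1 : ℕ) - j - 1) * svinin α (t - j) (k+1) (n - j - 1)
        = ∑ j ∈ Finset.range t, ∑ i ∈ Finset.range (t - j),
            α (n - k - j - 2) * (svinin α (i+1) k (n - j - 2) * α (n - j - 1 - i)) := by
          refine Finset.sum_congr rfl fun j _ => ?_
          rw [svinin_right α k (t-j) (n-j-1), Finset.mul_sum]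
          refine Finset.sum_congr rfl fun i _ => ?_
          push_cast; ring_nf
      _ = ∑ p ∈ Finset.range t, ∑ q ∈ Finset.range (p+1),
            α (n - k - q - 2) * (svinin α ((p-q)+1) k (n - q - 2) * α (n - q - 1 - (p-q : ℕ))) :=
          svinin_tri t _
      _ = ∑ j ∈ Finset.range t, svinin α (j+1) (k+1) (n-2) * α (n - j - 1) := by
          refine Finset.sum_congr rfl fun p hp => ?_
          rw [svinin_succ', Finset.sum_mul]
          refine Finset.sum_congr rfl fun q hq => ?_
          simp only [Finset.mem_range] at hp hq
          have h1 : p + 1 - q = (p - q) + 1 := by omega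
          have h2 : ((p - q : ℕ) : ℤ) = (p : ℤ) - q := by omega
          rw [h1, h2, mul_assoc]
          congr 2 <;> ring_nf

/-- The key difference identity:
`S_s^{k+1}(n) − S_s^{k+1}(n−1) = α_{n−k}·S_s^k(n) − S_s^k(n−2)·α_{n−s}`. -/
lemma svininC (k s : ℕ) (n : ℤ) :
    svinin α s (k+1) n - svinin α s (k+1) (n-1)
      = α (n - k) * svinin α s k n - svinin α s k (n-2) * α (n - s) := by
  have h0 : ∀ (j : ℕ) (x : ℤ), svinin α 0 (j+1) x = 0 := fun j x => by
    rw [svinin_succ']; simp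
  cases s with
  | zero =>
    cases k with
    | zero => simp [h0, svinin]
    | succ k => simp [h0]
  | succ t =>
    have hL : svinin α (t+1) (k+1) n
        = (∑ j ∈ Finset.range t, α (n - k - j - 1) * svinin α (t - j) k (n - j - 1))
          + α (n - k) * svinin α (t+1) k n := by
      rw [svinin_succ', Finset.sum_range_succ']
      congr 1
      · refine Finset.sum_congr rfl fun j _ => ?_
        have h1 : t + 1 - (j + 1) = t - j := by omega
        rw [h1]
        congr 2 <;> push_cast <;> ring
      · norm_num
    have hR : svinin α (t+1) (k+1) (n-1)
        = (∑ j ∈ Finset.range t, svinin α (j+1) k (n-2) * α (n - j - 1))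
          + svinin α (t+1) k (n-2) * α (n - (t+1 : ℕ)) := by
      rw [svinin_right α k (t+1) (n-1), Finset.sum_range_succ]
      congr 1
      · refine Finset.sum_congr rfl fun j _ => ?_
        congr 2 <;> push_cast <;> ring
      · congr 2
        · ring
        · push_cast; ring
    rw [hL, hR, svininA α k t n]
    abel

end Aux

/-- For every `n ∈ ℤ`: `F_n − F_{n−1} = 1 + α_n · P_{0,n+1} − P_{0,n−1} · α_{n−1}`. -/
theorem dPI_gamma_difference {R : Type*} [Ring R] (α : ℤ → R)
    (m : ℕ) (d : ℕ → R) (hd : ∀ k ≤ m, d k ∈ Set.center R) (n : ℤ) :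
    Fgam α m d n - Fgam α m d (n - 1)
      = 1 + α n * P0 α m d (n + 1) - P0 α m d (n - 1) * α (n - 1) := by
  have hIcc : ∀ (N : ℤ),
      (∑ r ∈ Finset.Icc 1 (m + 1), d (r - 1) * svinin α r r (N + (r : ℤ) - 1))
        = ∑ t ∈ Finset.range (m+1), d t * svinin α (t+1) (t+1) (N + (t:ℤ)) := by
    intro N
    rw [← Finset.Ico_add_one_right_eq_Icc, Finset.sum_Ico_eq_sum_range]
    refine Finset.sum_congr rfl fun t ht => ?_
    have e1 : 1 + t - 1 = t := by omega
    have e2 : 1 + t = t + 1 := by omega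
    rw [e1, e2]
    congr 1
    push_cast; ring
  have key : ∀ t ∈ Finset.range (m+1),
      d t * svinin α (t+1) (t+1) (n + (t:ℤ)) - d t * svinin α (t+1) (t+1) (n - 1 + (t:ℤ))
        = α n * (d t * svinin α (t+1) t (n + 1 + (t:ℤ) - 1))
          - (d t * svinin α (t+1) t (n - 1 + (t:ℤ) - 1)) * α (n-1) := by
    intro t ht
    simp only [Finset.mem_range] at ht
    have hc := svininC α t (t+1) (n + (t:ℤ))
    have a2 : n + (t:ℤ) - (t:ℤ) = n := by ring
    have a3 : n + (t:ℤ) - ((t+1 : ℕ):ℤ) = n - 1 := by push_cast; ring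
    have a4 : n + (t:ℤ) - 2 = n - 1 + (t:ℤ) - 1 := by ring
    have a1 : n + (t:ℤ) - 1 = n - 1 + (t:ℤ) := by ring
    rw [a2, a3, a4, a1] at hc
    have a5 : n + 1 + (t:ℤ) - 1 = n + (t:ℤ) := by ring
    rw [a5]
    have comm : ∀ g : R, g * d t = d t * g := fun g =>
      ((Set.mem_center_iff.mp (hd t (by omega))).comm g).symm
    have rearr : ∀ X Y : R,
        d t * (α n * X - Y * α (n-1)) = α n * (d t * X) - (d t * Y) * α (n-1) := by
      intro X Y
      rw [mul_sub, ← mul_assoc, ← comm (α n), mul_assoc, ← mul_assoc (d t) Y]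
    rw [← mul_sub, hc, rearr]
  calc Fgam α m d n - Fgam α m d (n - 1)
      = (∑ t ∈ Finset.range (m+1),
          (d t * svinin α (t+1) (t+1) (n + (t:ℤ))
            - d t * svinin α (t+1) (t+1) (n - 1 + (t:ℤ))))
          + ((n : R) - ((n - 1 : ℤ) : R)) := by
        simp only [Fgam]
        rw [hIcc n, hIcc (n-1), Finset.sum_sub_distrib]
        abel
    _ = (∑ t ∈ Finset.range (m+1),
          (α n * (d t * svinin α (t+1) t (n + 1 + (t:ℤ) - 1))
            - (d t * svinin α (t+1) t (n - 1 + (t:ℤ) - 1)) * α (n-1))) + 1 := by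
        rw [Finset.sum_congr rfl key]
        congr 1
        push_cast
        exact sub_sub_cancel _ _
    _ = 1 + α n * P0 α m d (n + 1) - P0 α m d (n - 1) * α (n - 1) := by
        rw [Finset.sum_sub_distrib, ← Finset.mul_sum, ← Finset.sum_mul]
        simp only [P0]
        abel
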